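/- For every k ≥ 0 and ℓ ≥ 1, the number of occurrences of the pattern [1-2^ℓ-3] in the Peano word X_{2k+1} equals C(4^{2k}+2^{2k}-1, ℓ), and the number of occurrences of the pattern [1-3^ℓ-2] in X_{2k+1} equals C(4^{2k}-2^{2k}, ℓ). -/

import Mathlib

/-- φ1: reverse the word and apply 1↦4, 2↦1, 3↦2, 4↦3. -/
def phi1 (A : List ℕ) : List ℕ := A.reverse.map (fun x => if x = 1 then 4 else x - 1)

/-- φ2: reverse the word and apply 1↦2, 2↦3, 3↦4, 4↦1. -/
def phi2 (A : List ℕ) : List ℕ := A.reverse.map (fun x => if x = 4 then 1 else x + 1)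

/-- The Peano words: `peano 1 = 123`, `peano (n+1) = φ1(Xₙ) 1 Xₙ 2 Xₙ 3 φ2(Xₙ)`. -/
def peano : ℕ → List ℕ
  | 0 => []
  | 1 => [1, 2, 3]
  | n + 2 =>
      phi1 (peano (n + 1)) ++ [1] ++ peano (n + 1) ++ [2] ++ peano (n + 1)
        ++ [3] ++ phi2 (peano (n + 1))

/-- Number of rises of a word. -/
def rises (w : List ℕ) : ℕ := ((w.zip w.tail).filter (fun p => p.1 < p.2)).length

/-- Number of descents of a word. -/
def descents (w : List ℕ) : ℕ := ((w.zip w.tail).filter (fun p => p.2 < p.1)).length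

/-- Number of occurrences of the pattern `[1-2^ℓ-3]`: sets of `ℓ` interior positions with
coinciding letters, strictly between the first and the last letter of `w`. -/
def pat123Count (w : List ℕ) (ℓ : ℕ) : ℕ :=
  (Finset.univ.filter (fun s : Finset (Fin w.length) =>
    s.card = ℓ ∧ (∀ i ∈ s, 0 < (i : ℕ) ∧ (i : ℕ) < w.length - 1) ∧
      (∀ i ∈ s, ∀ j ∈ s, w.get i = w.get j) ∧
      ∀ i ∈ s, w.headI < w.get i ∧ w.get i < w.getLastD 0)).card

/-- Number of occurrences of the pattern `[1-3^ℓ-2]`: sets of `ℓ` interior positions with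
coinciding letters, larger than the last letter, which is larger than the first letter. -/
def pat132Count (w : List ℕ) (ℓ : ℕ) : ℕ :=
  (Finset.univ.filter (fun s : Finset (Fin w.length) =>
    s.card = ℓ ∧ (∀ i ∈ s, 0 < (i : ℕ) ∧ (i : ℕ) < w.length - 1) ∧
      (∀ i ∈ s, ∀ j ∈ s, w.get i = w.get j) ∧
      ∀ i ∈ s, w.headI < w.getLastD 0 ∧ w.getLastD 0 < w.get i)).card

lemma peano_ne_nil (n : ℕ) : peano (n + 1) ≠ [] := by
  cases n with
  | zero => simp [peano]
  | succ m => simp [peano]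

lemma phi1_ne_nil {A : List ℕ} (h : A ≠ []) : phi1 A ≠ [] := by
  simp [phi1, h]

lemma phi2_ne_nil {A : List ℕ} (h : A ≠ []) : phi2 A ≠ [] := by
  simp [phi2, h]

lemma peano_mem : ∀ n, ∀ x ∈ peano n, 1 ≤ x ∧ x ≤ 4
  | 0 => by simp [peano]
  | 1 => by intro x hx; simp [peano] at hx; omega
  | n + 2 => by
    have ih := peano_mem (n + 1)
    intro x hx
    simp only [peano, phi1, phi2, List.mem_append, List.mem_map, List.mem_reverse,
      List.mem_singleton] at hx
    rcases hx with ((((((⟨y, hy, rfl⟩ | rfl) | h) | rfl) | h) | rfl) | ⟨y, hy, rfl⟩)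
    · have := ih y hy; split_ifs <;> omega
    · omega
    · exact ih _ h
    · omega
    · exact ih _ h
    · omega
    · have := ih y hy; split_ifs <;> omega

lemma count_map_rev (f : ℕ → ℕ) (A : List ℕ) (v u : ℕ)
    (h : ∀ x ∈ A, f x = v ↔ x = u) :
    (A.reverse.map f).count v = A.count u := by
  rw [List.count_eq_countP, List.count_eq_countP, List.countP_map,
    List.countP_reverse]
  apply List.countP_congr
  intro x hx
  simp [h x hx]

lemma peano_counts : ∀ n, (peano (n + 1)).count 1 = 4 ^ n ∧
    (peano (n + 1)).count 2 = 4 ^ n + 2 ^ n - 1 ∧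
    (peano (n + 1)).count 3 = 4 ^ n ∧
    (peano (n + 1)).count 4 = 4 ^ n - 2 ^ n
  | 0 => by simp [peano]
  | n + 1 => by
    obtain ⟨h1, h2, h3, h4⟩ := peano_counts n
    have hm := peano_mem (n + 1)
    have c11 : (phi1 (peano (n + 1))).count 1 = (peano (n + 1)).count 2 :=
      count_map_rev _ _ _ _ (fun x hx => by have := hm x hx; split_ifs <;> omega)
    have c12 : (phi1 (peano (n + 1))).count 2 = (peano (n + 1)).count 3 :=
      count_map_rev _ _ _ _ (fun x hx => by have := hm x hx; split_ifs <;> omega)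
    have c13 : (phi1 (peano (n + 1))).count 3 = (peano (n + 1)).count 4 :=
      count_map_rev _ _ _ _ (fun x hx => by have := hm x hx; split_ifs <;> omega)
    have c14 : (phi1 (peano (n + 1))).count 4 = (peano (n + 1)).count 1 :=
      count_map_rev _ _ _ _ (fun x hx => by have := hm x hx; split_ifs <;> omega)
    have c21 : (phi2 (peano (n + 1))).count 1 = (peano (n + 1)).count 4 :=
      count_map_rev _ _ _ _ (fun x hx => by have := hm x hx; split_ifs <;> omega)
    have c22 : (phi2 (peano (n + 1))).count 2 = (peano (n + 1)).count 1 :=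
      count_map_rev _ _ _ _ (fun x hx => by have := hm x hx; split_ifs <;> omega)
    have c23 : (phi2 (peano (n + 1))).count 3 = (peano (n + 1)).count 2 :=
      count_map_rev _ _ _ _ (fun x hx => by have := hm x hx; split_ifs <;> omega)
    have c24 : (phi2 (peano (n + 1))).count 4 = (peano (n + 1)).count 3 :=
      count_map_rev _ _ _ _ (fun x hx => by have := hm x hx; split_ifs <;> omega)
    have hp2 : (1:ℕ) ≤ 2 ^ n := Nat.one_le_two_pow
    have hp24 : (2:ℕ) ^ n ≤ 4 ^ n := Nat.pow_le_pow_left (by norm_num) n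
    have e4 : (4:ℕ) ^ (n+1) = 4 * 4 ^ n := by ring
    have e2 : (2:ℕ) ^ (n+1) = 2 * 2 ^ n := by ring
    refine ⟨?_, ?_, ?_, ?_⟩ <;>
      simp only [peano, List.count_append, c11, c12, c13, c14, c21, c22, c23, c24,
        h1, h2, h3, h4, List.count_singleton, List.count_cons, List.count_nil] <;>
      · norm_num
        omega

lemma peano_succ_eq (n : ℕ) : peano (n + 2) =
    phi1 (peano (n + 1)) ++ ([1] ++ peano (n + 1) ++ [2] ++ peano (n + 1)
      ++ [3] ++ phi2 (peano (n + 1))) := by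
  simp [peano]

lemma head?_peano_succ (n : ℕ) : (peano (n + 2)).head? =
    Option.map (fun x => if x = 1 then 4 else x - 1) (peano (n + 1)).getLast? := by
  rw [peano_succ_eq, List.head?_append_of_ne_nil _ (phi1_ne_nil (peano_ne_nil n)),
    phi1, List.head?_map, List.head?_reverse]

lemma getLast?_peano_succ (n : ℕ) : (peano (n + 2)).getLast? =
    Option.map (fun x => if x = 4 then 1 else x + 1) (peano (n + 1)).head? := by
  have : peano (n + 2) = (phi1 (peano (n + 1)) ++ [1] ++ peano (n + 1) ++ [2]
      ++ peano (n + 1) ++ [3]) ++ phi2 (peano (n + 1)) := by simp [peano]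
  rw [this, List.getLast?_append_of_ne_nil _ (phi2_ne_nil (peano_ne_nil n)),
    phi2, List.getLast?_map, List.getLast?_reverse]

lemma peano_head_last : ∀ k, (peano (2 * k + 1)).head? = some 1 ∧
    (peano (2 * k + 1)).getLast? = some 3
  | 0 => by constructor <;> rfl
  | k + 1 => by
    obtain ⟨h1, h2⟩ := peano_head_last k
    have e1 : 2 * (k + 1) + 1 = (2 * k + 1) + 2 := by ring
    have e2 : 2 * k + 2 = (2 * k) + 2 := by ring
    have m1 : (peano (2 * k + 1 + 1)).head? = some 2 := by
      rw [show 2 * k + 1 + 1 = 2 * k + 2 from rfl, head?_peano_succ, h2]; rfl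
    have m2 : (peano (2 * k + 1 + 1)).getLast? = some 2 := by
      rw [show 2 * k + 1 + 1 = 2 * k + 2 from rfl, getLast?_peano_succ, h1]; rfl
    rw [e1]
    constructor
    · rw [head?_peano_succ, m2]; rfl
    · rw [getLast?_peano_succ, m1]; rfl

lemma count_eq_card_filter (w : List ℕ) (a : ℕ) :
    (Finset.univ.filter fun i : Fin w.length => w.get i = a).card = w.count a := by
  induction w with
  | nil => simp
  | cons b t ih =>
    rw [Finset.card_filter] at *
    simp only [List.length_cons]
    rw [Fin.sum_univ_succ]
    simp only [List.get_eq_getElem, List.getElem_cons_zero, List.getElem_cons_succ,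
      Fin.val_succ, Fin.val_zero]
    rw [List.count_cons]
    simp only [List.get_eq_getElem] at ih
    rw [ih]
    by_cases hb : b = a
    · simp [hb]; omega
    · simp [hb, Ne.symm hb]

lemma endpoint_facts (w : List ℕ) (hh : w.head? = some 1) (hl : w.getLast? = some 3) :
    w.headI = 1 ∧ w.getLastD 0 = 3 ∧
    (∀ i : Fin w.length, (i : ℕ) = 0 → w.get i = 1) ∧
    (∀ i : Fin w.length, (i : ℕ) = w.length - 1 → w.get i = 3) := by
  refine ⟨?_, ?_, ?_, ?_⟩
  · cases w with
    | nil => simp at hh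
    | cons b t => simpa using hh
  · rw [List.getLastD_eq_getLast?, hl]; rfl
  · intro i hi
    have hlt : 0 < w.length := by have := i.isLt; omega
    have h0 : w[0]? = some 1 := by rw [← List.head?_eq_getElem?]; exact hh
    rw [List.getElem?_eq_getElem hlt] at h0
    have : i = ⟨0, hlt⟩ := Fin.ext hi
    rw [this]
    simpa using h0
  · intro i hi
    have hlt : w.length - 1 < w.length := by have := i.isLt; omega
    have h0 : w[w.length - 1]? = some 3 := by rw [← List.getLast?_eq_getElem?]; exact hl
    rw [List.getElem?_eq_getElem hlt] at h0
    have : i = ⟨w.length - 1, hlt⟩ := Fin.ext hi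
    rw [this]
    simpa using h0

lemma filter_interior_card (w : List ℕ) (a : ℕ) (ha0 : a ≠ 1) (hal : a ≠ 3)
    (hg0 : ∀ i : Fin w.length, (i : ℕ) = 0 → w.get i = 1)
    (hgl : ∀ i : Fin w.length, (i : ℕ) = w.length - 1 → w.get i = 3) :
    (Finset.univ.filter fun i : Fin w.length =>
      0 < (i : ℕ) ∧ (i : ℕ) < w.length - 1 ∧ w.get i = a).card = w.count a := by
  rw [← count_eq_card_filter]
  congr 1
  ext i
  simp only [Finset.mem_filter, Finset.mem_univ, true_and]
  constructor
  · tauto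
  · intro h2
    have hil := i.isLt
    have hne0 : (i : ℕ) ≠ 0 := by
      intro h; have := hg0 i h; rw [this] at h2; exact ha0 h2.symm
    have hnel : (i : ℕ) ≠ w.length - 1 := by
      intro h; have := hgl i h; rw [this] at h2; exact hal h2.symm
    exact ⟨by omega, by omega, h2⟩

lemma pat123_eq (w : List ℕ) (ℓ : ℕ) (hh : w.head? = some 1) (hl : w.getLast? = some 3) :
    pat123Count w ℓ = (w.count 2).choose ℓ := by
  obtain ⟨h1, h3, hg0, hgl⟩ := endpoint_facts w hh hl
  rw [pat123Count, ← filter_interior_card w 2 (by norm_num) (by norm_num) hg0 hgl,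
    ← Finset.card_powersetCard]
  congr 1
  ext s
  simp only [Finset.mem_filter, Finset.mem_univ, true_and, Finset.mem_powersetCard]
  constructor
  · rintro ⟨hc, hint, heq, hb⟩
    refine ⟨fun i hi => ?_, hc⟩
    simp only [Finset.mem_filter, Finset.mem_univ, true_and]
    obtain ⟨hb1, hb2⟩ := hb i hi
    rw [h1] at hb1; rw [h3] at hb2
    exact ⟨(hint i hi).1, (hint i hi).2, by omega⟩
  · rintro ⟨hsub, hc⟩
    have hget : ∀ i ∈ s, 0 < (i : ℕ) ∧ (i : ℕ) < w.length - 1 ∧ w.get i = 2 := by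
      intro i hi
      have := hsub hi
      simpa only [Finset.mem_filter, Finset.mem_univ, true_and] using this
    refine ⟨hc, fun i hi => ⟨(hget i hi).1, (hget i hi).2.1⟩,
      fun i hi j hj => by rw [(hget i hi).2.2, (hget j hj).2.2],
      fun i hi => by rw [h1, h3, (hget i hi).2.2]; omega⟩

lemma pat132_eq (w : List ℕ) (ℓ : ℕ) (hh : w.head? = some 1) (hl : w.getLast? = some 3)
    (hm : ∀ x ∈ w, x ≤ 4) :
    pat132Count w ℓ = (w.count 4).choose ℓ := by
  obtain ⟨h1, h3, hg0, hgl⟩ := endpoint_facts w hh hl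
  rw [pat132Count, ← filter_interior_card w 4 (by norm_num) (by norm_num) hg0 hgl,
    ← Finset.card_powersetCard]
  congr 1
  ext s
  simp only [Finset.mem_filter, Finset.mem_univ, true_and, Finset.mem_powersetCard]
  constructor
  · rintro ⟨hc, hint, heq, hb⟩
    refine ⟨fun i hi => ?_, hc⟩
    simp only [Finset.mem_filter, Finset.mem_univ, true_and]
    obtain ⟨hb1, hb2⟩ := hb i hi
    rw [h3] at hb2
    have hle : w.get i ≤ 4 := hm _ (List.get_mem w i)
    exact ⟨(hint i hi).1, (hint i hi).2, by omega⟩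
  · rintro ⟨hsub, hc⟩
    have hget : ∀ i ∈ s, 0 < (i : ℕ) ∧ (i : ℕ) < w.length - 1 ∧ w.get i = 4 := by
      intro i hi
      have := hsub hi
      simpa only [Finset.mem_filter, Finset.mem_univ, true_and] using this
    refine ⟨hc, fun i hi => ⟨(hget i hi).1, (hget i hi).2.1⟩,
      fun i hi j hj => by rw [(hget i hi).2.2, (hget j hj).2.2],
      fun i hi => by rw [h1, h3, (hget i hi).2.2]; omega⟩

theorem peano_pat123_pat132 (k ℓ : ℕ) (hℓ : 1 ≤ ℓ) :
    pat123Count (peano (2 * k + 1)) ℓ = Nat.choose (4 ^ (2 * k) + 2 ^ (2 * k) - 1) ℓ ∧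
      pat132Count (peano (2 * k + 1)) ℓ = Nat.choose (4 ^ (2 * k) - 2 ^ (2 * k)) ℓ := by
  obtain ⟨hh, hl⟩ := peano_head_last k
  have hm : ∀ x ∈ peano (2 * k + 1), x ≤ 4 := fun x hx => (peano_mem _ x hx).2
  obtain ⟨-, hc2, -, hc4⟩ := peano_counts (2 * k)
  exact ⟨by rw [pat123_eq _ ℓ hh hl, hc2], by rw [pat132_eq _ ℓ hh hl hm, hc4]⟩
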